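/- Let −∞ < t₀ < T < ∞, let a : [t₀, T] → [0, ∞) be continuous, let A ≥ 0, and let ψ : [t₀, T] → [0, ∞) be continuous and satisfy, for all u ∈ [t₀, T], ψ(u) ≤ A + ∫_{t₀}^u a(s) ψ(s) ds + ∫_{t₀}^u ∫_{t₀}^s a(r) ψ(r) dr ds. Then for all u ∈ [t₀, T], ψ(u) ≤ A · exp( ∫_{t₀}^u a(s) ds + ∫_{t₀}^u ∫_{t₀}^s a(r) dr ds ). -/

import Mathlib

open Set MeasureTheory Filter intervalIntegral

noncomputable section

private lemma primitive_hasDerivAt {f : ℝ → ℝ} {t₀ T x : ℝ}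
    (hf : ContinuousOn f (Set.Icc t₀ T)) (hx : x ∈ Set.Ioo t₀ T) :
    HasDerivAt (fun u => ∫ s in t₀..u, f s) (f x) x := by
  have hsub : Set.uIcc t₀ x ⊆ Set.Icc t₀ T := by
    rw [Set.uIcc_of_le hx.1.le]
    exact Set.Icc_subset_Icc le_rfl hx.2.le
  have hint : IntervalIntegrable f MeasureTheory.volume t₀ x :=
    (hf.mono hsub).intervalIntegrable
  refine intervalIntegral.integral_hasDerivAt_right hint ?_ ?_
  · exact (hf.mono Set.Ioo_subset_Icc_self).stronglyMeasurableAtFilter isOpen_Ioo x hx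
  · exact hf.continuousAt (Icc_mem_nhds hx.1 hx.2)

private lemma primitive_continuousOn {f : ℝ → ℝ} {t₀ T : ℝ} (ht : t₀ ≤ T)
    (hf : ContinuousOn f (Set.Icc t₀ T)) :
    ContinuousOn (fun u => ∫ s in t₀..u, f s) (Set.Icc t₀ T) := by
  have h : MeasureTheory.IntegrableOn f (Set.uIcc t₀ T) MeasureTheory.volume := by
    rw [Set.uIcc_of_le ht]; exact hf.integrableOn_Icc
  have := intervalIntegral.continuousOn_primitive_interval (μ := MeasureTheory.volume) h
  rwa [Set.uIcc_of_le ht] at this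

theorem bykov_gronwall (t₀ T A : ℝ) (ht : t₀ < T) (hA : 0 ≤ A)
    (a ψ : ℝ → ℝ)
    (ha : ContinuousOn a (Set.Icc t₀ T)) (ha0 : ∀ u ∈ Set.Icc t₀ T, 0 ≤ a u)
    (hψ : ContinuousOn ψ (Set.Icc t₀ T)) (hψ0 : ∀ u ∈ Set.Icc t₀ T, 0 ≤ ψ u)
    (hineq : ∀ u ∈ Set.Icc t₀ T,
      ψ u ≤ A + (∫ s in t₀..u, a s * ψ s) + ∫ s in t₀..u, ∫ r in t₀..s, a r * ψ r) :
    ∀ u ∈ Set.Icc t₀ T,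
      ψ u ≤ A * Real.exp ((∫ s in t₀..u, a s) + ∫ s in t₀..u, ∫ r in t₀..s, a r) := by
  set I := Set.Icc t₀ T with hI
  have haψ : ContinuousOn (fun s => a s * ψ s) I := ha.mul hψ
  have haψ0 : ∀ s ∈ I, 0 ≤ a s * ψ s := fun s hs => mul_nonneg (ha0 s hs) (hψ0 s hs)
  have hsubI : ∀ {x y : ℝ}, x ∈ I → y ∈ I → Set.uIcc x y ⊆ I := by
    intro x y hx hy
    exact Set.uIcc_subset_Icc hx hy
  have hintaψ : ∀ {x y : ℝ}, x ∈ I → y ∈ I →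
      IntervalIntegrable (fun s => a s * ψ s) MeasureTheory.volume x y :=
    fun {x y} hx hy => (haψ.mono (hsubI hx hy)).intervalIntegrable
  have hinta : ∀ {x y : ℝ}, x ∈ I → y ∈ I →
      IntervalIntegrable a MeasureTheory.volume x y :=
    fun {x y} hx hy => (ha.mono (hsubI hx hy)).intervalIntegrable
  have ht₀ : t₀ ∈ I := Set.left_mem_Icc.2 ht.le
  -- primitives
  set G : ℝ → ℝ := fun s => ∫ r in t₀..s, a r * ψ r with hG
  set cA : ℝ → ℝ := fun s => ∫ r in t₀..s, a r with hcA
  have hGcont : ContinuousOn G I := primitive_continuousOn ht.le haψ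
  have hcAcont : ContinuousOn cA I := primitive_continuousOn ht.le ha
  have hG0 : ∀ s ∈ I, 0 ≤ G s := by
    intro s hs
    exact intervalIntegral.integral_nonneg hs.1
      (fun r hr => haψ0 r ⟨hr.1, hr.2.trans hs.2⟩)
  have hintG : ∀ {x y : ℝ}, x ∈ I → y ∈ I →
      IntervalIntegrable G MeasureTheory.volume x y :=
    fun {x y} hx hy => (hGcont.mono (hsubI hx hy)).intervalIntegrable
  -- Φ and B
  set Φ : ℝ → ℝ := fun u => A + G u + ∫ s in t₀..u, G s with hΦ
  set B : ℝ → ℝ := fun u => cA u + ∫ s in t₀..u, cA s with hB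
  have hψleΦ : ∀ u ∈ I, ψ u ≤ Φ u := hineq
  have hΦcont : ContinuousOn Φ I :=
    (continuousOn_const.add hGcont).add (primitive_continuousOn ht.le hGcont)
  have hBcont : ContinuousOn B I :=
    hcAcont.add (primitive_continuousOn ht.le hcAcont)
  -- Φ is monotone on I
  have hΦmono : MonotoneOn Φ I := by
    intro x hx y hy hxy
    have h1 : G x + (∫ s in x..y, a s * ψ s) = G y :=
      intervalIntegral.integral_add_adjacent_intervals (hintaψ ht₀ hx) (hintaψ hx hy)
    have h2 : (∫ s in t₀..x, G s) + (∫ s in x..y, G s) = ∫ s in t₀..y, G s :=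
      intervalIntegral.integral_add_adjacent_intervals (hintG ht₀ hx) (hintG hx hy)
    have h3 : 0 ≤ ∫ s in x..y, a s * ψ s :=
      intervalIntegral.integral_nonneg hxy
        (fun r hr => haψ0 r ⟨hx.1.trans hr.1, hr.2.trans hy.2⟩)
    have h4 : 0 ≤ ∫ s in x..y, G s :=
      intervalIntegral.integral_nonneg hxy
        (fun r hr => hG0 r ⟨hx.1.trans hr.1, hr.2.trans hy.2⟩)
    simp only [hΦ]
    linarith
  -- g = Φ * exp(-B) is antitone on I
  set g : ℝ → ℝ := fun u => Φ u * Real.exp (-(B u)) with hg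
  have hderivs : ∀ x ∈ Set.Ioo t₀ T,
      HasDerivAt g ((a x * ψ x + G x - (a x + cA x) * Φ x) * Real.exp (-(B x))) x := by
    intro x hx
    have hG' : HasDerivAt G (a x * ψ x) x := primitive_hasDerivAt haψ hx
    have hF2' : HasDerivAt (fun u => ∫ s in t₀..u, G s) (G x) x :=
      primitive_hasDerivAt hGcont hx
    have hcA' : HasDerivAt cA (a x) x := primitive_hasDerivAt ha hx
    have hF2a' : HasDerivAt (fun u => ∫ s in t₀..u, cA s) (cA x) x :=
      primitive_hasDerivAt hcAcont hx
    have hΦ' : HasDerivAt Φ (a x * ψ x + G x) x := by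
      exact (((hasDerivAt_const x A).add hG').add hF2').congr_deriv (by ring)
    have hB' : HasDerivAt B (a x + cA x) x := hcA'.add hF2a'
    have hE' : HasDerivAt (fun u => Real.exp (-(B u)))
        (Real.exp (-(B x)) * (-(a x + cA x))) x := hB'.neg.exp
    have := hΦ'.mul hE'
    exact this.congr_deriv (by ring)
  have hganti : AntitoneOn g I := by
    refine antitoneOn_of_deriv_nonpos (convex_Icc t₀ T)
      (hΦcont.mul (Real.continuous_exp.comp_continuousOn hBcont.neg)) ?_ ?_
    · intro x hx
      rw [interior_Icc] at hx
      exact (hderivs x hx).differentiableAt.differentiableWithinAt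
    · intro x hx
      rw [interior_Icc] at hx
      rw [(hderivs x hx).deriv]
      have hxI : x ∈ I := Set.Ioo_subset_Icc_self hx
      have key : a x * ψ x + G x ≤ (a x + cA x) * Φ x := by
        have h1 : a x * ψ x ≤ a x * Φ x :=
          mul_le_mul_of_nonneg_left (hψleΦ x hxI) (ha0 x hxI)
        have h2 : G x ≤ cA x * Φ x := by
          have hmono : ∀ r ∈ Set.Icc t₀ x, a r * ψ r ≤ a r * Φ x := by
            intro r hr
            have hrI : r ∈ I := ⟨hr.1, hr.2.trans hx.2.le⟩
            exact mul_le_mul_of_nonneg_left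
              ((hψleΦ r hrI).trans (hΦmono hrI hxI hr.2)) (ha0 r hrI)
          calc G x ≤ ∫ r in t₀..x, a r * Φ x := by
                refine intervalIntegral.integral_mono_on hx.1.le (hintaψ ht₀ hxI) ?_ hmono
                exact (hinta ht₀ hxI).mul_const _
            _ = cA x * Φ x := by
                rw [intervalIntegral.integral_mul_const]
        linarith [mul_comm (cA x) (Φ x)]
      have hE : 0 < Real.exp (-(B x)) := Real.exp_pos _
      nlinarith [key, hE]
  -- conclude
  intro u hu
  have h1 : g u ≤ g t₀ := hganti ht₀ hu hu.1
  have h2 : g t₀ = A := by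
    simp [hg, hΦ, hB, hG, hcA]
  have h4 : Φ u * Real.exp (-(B u)) ≤ A := h2 ▸ h1
  have h3 : Φ u ≤ A * Real.exp (B u) := by
    calc Φ u = Φ u * Real.exp (-(B u)) * Real.exp (B u) := by
          rw [mul_assoc, ← Real.exp_add]; simp
      _ ≤ A * Real.exp (B u) :=
          mul_le_mul_of_nonneg_right h4 (Real.exp_pos _).le
  exact (hψleΦ u hu).trans h3
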